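/- For a parking-function word p ∈ [m]^n with an integer-coordinate fixed point, the two inversion algorithms agree: the function U produced by the Gorsky–Mazin–Vazirani placement algorithm equals the function V produced by the iterated-multiset algorithm (starting from S_0 = {0,1,...,m-1} and setting V(i) = S_i[p(i)], S_{i+1} = (S_i \ {V(i)}) ∪ {V(i) + m}), i.e., U(i) = V(i) for all i ≥ 0. -/

import Mathlib

/-- The multiset algorithm: `SAlg m p i` is the size-`m` set `S_i`, starting from
`S_0 = {0, 1, …, m-1}`; at step `i` the `(p i + 1)`-st smallest element `V(i)` of
`S_i` is replaced by `V(i) + m`. -/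
def SAlg (m : ℕ) (p : ℕ → ℕ) : ℕ → Finset ℕ
  | 0 => Finset.range m
  | i+1 =>
      let v := ((SAlg m p i).sort (· ≤ ·)).getD (p i) 0
      insert (v + m) ((SAlg m p i).erase v)

/-- `VAlg m p i = S_i[p i]`, the value output by the iterated-multiset algorithm
at position `i`. -/
def VAlg (m : ℕ) (p : ℕ → ℕ) (i : ℕ) : ℕ :=
  ((SAlg m p i).sort (· ≤ ·)).getD (p i) 0

/-- `W` satisfies the Gorsky–Mazin–Vazirani placement specification, where
`W α = U⁻¹(α)` is the position at which the value `α` is placed: `α` goes to the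
leftmost position `i` that is unoccupied by smaller values, lies to the right of
the position of `α - m`, and satisfies
`p i = #{β : α - m < β < α, U⁻¹(β) > i}`. -/
def GMVSpec (m : ℕ) (p : ℕ → ℕ) (W : ℕ → ℕ) : Prop :=
  ∀ α : ℕ, IsLeast {i : ℕ |
    (∀ β < α, W β ≠ i) ∧
    (∀ β : ℕ, β + m = α → W β < i) ∧
    p i = ((Finset.range α).filter
      (fun β : ℕ => (α : ℤ) - (m : ℤ) < (β : ℤ) ∧ i < W β)).card} (W α)

namespace AlgAgree

def UF (m : ℕ) (p : ℕ → ℕ) (i : ℕ) : Finset ℕ := (Finset.range i).image (VAlg m p)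

variable {m : ℕ} {p : ℕ → ℕ}

lemma mem_UF {i β : ℕ} : β ∈ UF m p i ↔ ∃ j < i, VAlg m p j = β := by
  simp [UF]

lemma salg_succ (m : ℕ) (p : ℕ → ℕ) (i : ℕ) :
    SAlg m p (i+1) = insert (VAlg m p i + m) ((SAlg m p i).erase (VAlg m p i)) := rfl

lemma uf_succ (m : ℕ) (p : ℕ → ℕ) (i : ℕ) :
    UF m p (i+1) = insert (VAlg m p i) (UF m p i) := by
  simp [UF, Finset.range_add_one]

lemma sInv (m : ℕ) (p : ℕ → ℕ) (hm : 0 < m) (hlt : ∀ i, p i < m) : ∀ i : ℕ,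
    (SAlg m p i).card = m ∧
    (∀ α, α ∈ SAlg m p i ↔ (α ∉ UF m p i ∧ (α < m ∨ (m ≤ α ∧ α - m ∈ UF m p i)))) ∧
    (∀ α, α + m ∈ UF m p i → α ∈ UF m p i) := by
  intro i
  induction i with
  | zero =>
    refine ⟨by simp [SAlg], ?_, ?_⟩
    · intro α
      show α ∈ Finset.range m ↔ _
      simp only [Finset.mem_range, UF, Finset.range_zero, Finset.image_empty,
        Finset.notMem_empty, not_false_iff, true_and, and_false, or_false]
    · intro α h
      simp [UF] at h
  | succ i ih =>
    obtain ⟨hc, hq, hr⟩ := ih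
    set v := VAlg m p i with hv
    have hvmem : v ∈ SAlg m p i := by
      have hlen : ((SAlg m p i).sort (· ≤ ·)).length = m := by
        rw [Finset.length_sort, hc]
      have hpi : p i < ((SAlg m p i).sort (· ≤ ·)).length := by rw [hlen]; exact hlt i
      have : v = ((SAlg m p i).sort (· ≤ ·)).get ⟨p i, hpi⟩ := by
        rw [hv, VAlg]; exact List.getD_eq_get (i := ⟨p i, hpi⟩) ..
      rw [this]
      exact Finset.mem_sort (· ≤ ·) |>.mp (List.get_mem _ _)
    have hvU : v ∉ UF m p i := ((hq v).mp hvmem).1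
    have hvmU : v + m ∉ UF m p i := fun h => hvU (hr v h)
    have hvmS : v + m ∉ SAlg m p i := by
      intro h
      have := (hq (v + m)).mp h
      have : v ∈ UF m p i := by
        rcases this.2 with h1 | h2
        · omega
        · simpa using h2.2
      exact hvU this
    refine ⟨?_, ?_, ?_⟩
    · rw [salg_succ]
      rw [Finset.card_insert_of_notMem (fun h => hvmS (Finset.mem_of_mem_erase h)),
        Finset.card_erase_of_mem hvmem, hc]
      omega
    · intro α
      rw [salg_succ, uf_succ, Finset.mem_insert, Finset.mem_erase]
      constructor
      · rintro (rfl | ⟨hne, hα⟩)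
        · refine ⟨?_, Or.inr ⟨by omega, by simp⟩⟩
          simp only [Finset.mem_insert]
          push_neg
          exact ⟨by omega, hvmU⟩
        · have := (hq α).mp hα
          refine ⟨?_, ?_⟩
          · simp only [Finset.mem_insert]; push_neg; exact ⟨hne, this.1⟩
          · rcases this.2 with h1 | h2
            · exact Or.inl h1
            · exact Or.inr ⟨h2.1, Finset.mem_insert_of_mem h2.2⟩
      · rintro ⟨hnotU, hpred⟩
        simp only [Finset.mem_insert] at hnotU
        push_neg at hnotU
        by_cases hαv : α = v + m
        · exact Or.inl hαv
        · refine Or.inr ⟨hnotU.1, (hq α).mpr ⟨hnotU.2, ?_⟩⟩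
          rcases hpred with h1 | ⟨h2, h3⟩
          · exact Or.inl h1
          · simp only [Finset.mem_insert] at h3
            rcases h3 with h3 | h3
            · exact absurd (by omega : α = v + m) hαv
            · exact Or.inr ⟨h2, h3⟩
    · intro α h
      rw [uf_succ] at h ⊢
      simp only [Finset.mem_insert] at h ⊢
      rcases h with h | h
      · -- α + m = v
        right
        have := (hq v).mp hvmem
        rcases this.2 with h1 | h2
        · omega
        · have : v - m = α := by omega
          rw [← this]; exact h2.2
      · exact Or.inr (hr α h)


lemma uf_add_mul (hm : 0 < m) (hlt : ∀ i, p i < m)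
    (hr : ∀ α, α + m ∈ UF m p i → α ∈ UF m p i) :
    ∀ (q x : ℕ), x + m * q ∈ UF m p i → x ∈ UF m p i := by
  intro q
  induction q with
  | zero => intro x h; simpa using h
  | succ q ih =>
    intro x h
    refine ih x (hr (x + m * q) ?_)
    have : x + m * q + m = x + m * (q + 1) := by ring
    rwa [this]

lemma class_unique (hm : 0 < m) (hlt : ∀ i, p i < m) {i : ℕ}
    (hq : ∀ α, α ∈ SAlg m p i ↔ (α ∉ UF m p i ∧ (α < m ∨ (m ≤ α ∧ α - m ∈ UF m p i))))
    (hr : ∀ α, α + m ∈ UF m p i → α ∈ UF m p i)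
    {a b : ℕ} (ha : a ∈ SAlg m p i) (hb : b ∈ SAlg m p i)
    (hab : a % m = b % m) : a = b := by
  have key : ∀ x y : ℕ, x ∈ SAlg m p i → y ∈ SAlg m p i → x % m = y % m → x < y → False := by
    intro x y hx hy hxy hlt'
    have hdvd : m ∣ y - x := (Nat.modEq_iff_dvd' hlt'.le).mp hxy
    obtain ⟨k, hk⟩ := hdvd
    have hk1 : 1 ≤ k := by
      rcases Nat.eq_zero_or_pos k with h | h
      · rw [h, Nat.mul_zero] at hk; omega
      · exact h
    have hmk : m * k = m * (k - 1) + m := by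
      have hkk : k - 1 + 1 = k := by omega
      calc m * k = m * (k - 1 + 1) := by rw [hkk]
        _ = m * (k - 1) + m := by ring
    have hym : m ≤ y := by omega
    have hyU : y - m ∈ UF m p i := by
      rcases ((hq y).mp hy).2 with h | h
      · omega
      · exact h.2
    have hxU : x ∈ UF m p i := by
      have heq : y - m = x + m * (k - 1) := by omega
      exact uf_add_mul hm hlt hr (k - 1) x (by rw [← heq]; exact hyU)
    exact ((hq x).mp hx).1 hxU
  rcases lt_trichotomy a b with h | h | h
  · exact absurd (key a b ha hb hab h) not_false
  · exact h
  · exact absurd (key b a hb ha hab.symm h) not_false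

lemma class_surj (hm : 0 < m) (hlt : ∀ i, p i < m) {i : ℕ}
    (hc : (SAlg m p i).card = m)
    (hq : ∀ α, α ∈ SAlg m p i ↔ (α ∉ UF m p i ∧ (α < m ∨ (m ≤ α ∧ α - m ∈ UF m p i))))
    (hr : ∀ α, α + m ∈ UF m p i → α ∈ UF m p i)
    {r : ℕ} (hrm : r < m) : ∃ a ∈ SAlg m p i, a % m = r := by
  have him : (SAlg m p i).image (· % m) = Finset.range m := by
    apply Finset.eq_of_subset_of_card_le
    · intro x hx
      simp only [Finset.mem_image] at hx
      obtain ⟨a, _, rfl⟩ := hx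
      exact Finset.mem_range.mpr (Nat.mod_lt _ hm)
    · rw [Finset.card_range,
        Finset.card_image_of_injOn (fun a ha b hb hab => class_unique hm hlt hq hr ha hb hab), hc]
  have : r ∈ (SAlg m p i).image (· % m) := by
    rw [him]; exact Finset.mem_range.mpr hrm
  simpa only [Finset.mem_image] using this

lemma countP_sorted_lt : ∀ (l : List ℕ), l.Pairwise (· < ·) → ∀ (j : ℕ) (h : j < l.length),
    l.countP (fun b => decide (b < l.get ⟨j, h⟩)) = j := by
  intro l
  induction l with
  | nil => intro _ j h; simp at h
  | cons a t ih =>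
    intro hs j h
    rcases List.pairwise_cons.mp hs with ⟨ha, ht⟩
    cases j with
    | zero =>
      show (a :: t).countP (fun b => decide (b < a)) = 0
      rw [List.countP_cons]
      have h0 : t.countP (fun b => decide (b < a)) = 0 := by
        rw [List.countP_eq_zero]
        intro b hb
        simp only [decide_eq_true_eq, not_lt]
        exact (ha b hb).le
      simp [h0]
    | succ j =>
      have hlen : j < t.length := by simpa using h
      show (a :: t).countP (fun b => decide (b < t.get ⟨j, hlen⟩)) = j + 1
      rw [List.countP_cons]
      have hget : a < t.get ⟨j, hlen⟩ := ha _ (List.get_mem _ _)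
      simp only [List.get_eq_getElem] at hget
      rw [ih ht j hlen]
      simp [hget]

lemma card_filter_eq_countP (s : Finset ℕ) (x : ℕ) :
    (s.filter (· < x)).card = (s.sort (· ≤ ·)).countP (fun b => decide (b < x)) := by
  have hperm : (s.sort (· ≤ ·)).Perm s.toList := Finset.sort_perm_toList s _
  rw [hperm.countP_eq]
  have h1 : (s.filter (· < x)).card = Multiset.countP (· < x) s.val := by
    rw [Finset.card, Finset.filter_val, Multiset.countP_eq_card_filter]
  rw [h1, ← Finset.coe_toList s, Multiset.coe_countP]

lemma getD_sort_eq (s : Finset ℕ) {γ k : ℕ} (hγ : γ ∈ s)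
    (hk : (s.filter (· < γ)).card = k) :
    ((s.sort (· ≤ ·)).getD k 0) = γ := by
  have hsort := (Finset.sortedLT_sort s).pairwise
  have hmem : γ ∈ s.sort (· ≤ ·) := (Finset.mem_sort _).mpr hγ
  obtain ⟨⟨j, hj⟩, hget⟩ := List.mem_iff_get.mp hmem
  have hcount := countP_sorted_lt _ hsort j hj
  rw [hget] at hcount
  rw [← card_filter_eq_countP] at hcount
  have : j = k := by rw [← hk, ← hcount]
  subst this
  exact (List.getD_eq_get (i := ⟨j, hj⟩) ..).trans hget

end AlgAgree

/-- For an `n`-periodic parking-function word `p` in `[m]` (containing a `0`), the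
GMV placement algorithm and the iterated-multiset algorithm agree:
`U(i) = V(i)` for all `i`, i.e. `W (V i) = i` where `W = U⁻¹`. -/
theorem algorithms_agree (m n : ℕ) (hm : 0 < m) (hn : 0 < n)
    (p : ℕ → ℕ) (hlt : ∀ i, p i < m) (hper : ∀ i, p (i + n) = p i)
    (hzero : ∃ i < n, p i = 0)
    (hpark : ∀ i : ℕ, 1 ≤ i → i ≤ m →
      i * n ≤ ((Finset.range n).filter (fun j => p j < i)).card * m)
    (W : ℕ → ℕ) (hWbij : Function.Bijective W) (hW : GMVSpec m p W) :
    ∀ i : ℕ, W (VAlg m p i) = i := by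
  intro i
  induction i using Nat.strong_induction_on with
  | _ i IH =>
  obtain ⟨hc, hq, hrr⟩ := AlgAgree.sInv m p hm hlt i
  have hU : ∀ β, β ∈ AlgAgree.UF m p i ↔ W β < i := by
    intro β
    rw [AlgAgree.mem_UF]
    constructor
    · rintro ⟨j, hj, rfl⟩; rw [IH j hj]; exact hj
    · intro hβ
      exact ⟨W β, hβ, hWbij.1 (IH (W β) hβ)⟩
  obtain ⟨γ, hγ⟩ := hWbij.2 i
  obtain ⟨h1, h2, h3⟩ := (hW γ).1
  rw [hγ] at h1 h2 h3
  have hγU : γ ∉ AlgAgree.UF m p i := by rw [hU, hγ]; omega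
  have hγS : γ ∈ SAlg m p i := by
    rw [hq]
    refine ⟨hγU, ?_⟩
    by_cases hmγ : γ < m
    · exact Or.inl hmγ
    · refine Or.inr ⟨le_of_not_gt hmγ, ?_⟩
      rw [hU]
      exact h2 (γ - m) (by omega)
  have hcard : ((SAlg m p i).filter (· < γ)).card = p i := by
    rw [h3]
    refine Finset.card_bij (fun a _ => a + m * ((γ - 1 - a) / m)) ?_ ?_ ?_
    · -- maps into target
      intro a ha
      simp only [Finset.mem_filter] at ha
      obtain ⟨haS, haγ⟩ := ha
      have hdm := Nat.div_add_mod (γ - 1 - a) m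
      have hmod := Nat.mod_lt (γ - 1 - a) hm
      have hub : a + m * ((γ - 1 - a) / m) ≤ γ - 1 := by omega
      have hlb : γ ≤ a + m * ((γ - 1 - a) / m) + m := by omega
      have hne : a % m ≠ γ % m := by
        intro h
        exact absurd (AlgAgree.class_unique hm hlt hq hrr haS hγS h) (by omega)
      have hmodq : ∀ j : ℕ, (a + m * j) % m = a % m := by
        intro j
        rw [Nat.add_mul_mod_self_left]
      have hneq : a + m * ((γ - 1 - a) / m) + m ≠ γ := by
        intro h
        apply hne
        have heq2 : a + m * ((γ - 1 - a) / m) + m = a + m * ((γ - 1 - a) / m + 1) := by ring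
        rw [← h, heq2, hmodq]
      have hWa : i < W (a + m * ((γ - 1 - a) / m)) := by
        have hnU : a + m * ((γ - 1 - a) / m) ∉ AlgAgree.UF m p i := by
          intro h
          exact ((hq a).mp haS).1 (AlgAgree.uf_add_mul hm hlt hrr _ a h)
        rw [hU] at hnU
        have hWne : W (a + m * ((γ - 1 - a) / m)) ≠ i := by
          intro h
          have heq3 : a + m * ((γ - 1 - a) / m) = γ := hWbij.1 (by rw [h, hγ])
          apply hne
          rw [← heq3, hmodq]
        omega
      simp only [Finset.mem_filter, Finset.mem_range]
      have hlb2 : γ < a + m * ((γ - 1 - a) / m) + m := by omega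
      refine ⟨by omega, by omega, hWa⟩
    · -- injective
      intro a1 ha1 a2 ha2 heq
      simp only [Finset.mem_filter] at ha1 ha2
      have heq' : a1 + m * ((γ - 1 - a1) / m) = a2 + m * ((γ - 1 - a2) / m) := heq
      have hmod : a1 % m = a2 % m := by
        have e1 : (a1 + m * ((γ - 1 - a1) / m)) % m = a1 % m := by
          rw [Nat.add_mul_mod_self_left]
        have e2 : (a2 + m * ((γ - 1 - a2) / m)) % m = a2 % m := by
          rw [Nat.add_mul_mod_self_left]
        rw [← e1, heq', e2]
      exact AlgAgree.class_unique hm hlt hq hrr ha1.1 ha2.1 hmod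
    · -- surjective
      intro β hβ
      simp only [Finset.mem_filter, Finset.mem_range] at hβ
      obtain ⟨hβγ, hβ1, hβ2⟩ := hβ
      obtain ⟨a, haS, har⟩ := AlgAgree.class_surj hm hlt hc hq hrr (Nat.mod_lt β hm)
      have haβ : a ≤ β := by
        by_contra hab
        push_neg at hab
        have hdvd : m ∣ a - β := (Nat.modEq_iff_dvd' hab.le).mp (by rw [Nat.ModEq, har])
        obtain ⟨k, hk⟩ := hdvd
        have hk1 : 1 ≤ k := by
          rcases Nat.eq_zero_or_pos k with h | h
          · rw [h, Nat.mul_zero] at hk; omega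
          · exact h
        have hmk : m * k = m * (k - 1) + m := by
          have hkk : k - 1 + 1 = k := by omega
          calc m * k = m * (k - 1 + 1) := by rw [hkk]
            _ = m * (k - 1) + m := by ring
        have haU : β ∈ AlgAgree.UF m p i := by
          rcases ((hq a).mp haS).2 with h | ⟨hma, hUa⟩
          · omega
          · have heq : a - m = β + m * (k - 1) := by omega
            exact AlgAgree.uf_add_mul hm hlt hrr (k - 1) β (by rw [← heq]; exact hUa)
        rw [hU] at haU
        omega
      have hdvd2 : m ∣ β - a := (Nat.modEq_iff_dvd' haβ).mp (by rw [Nat.ModEq, har])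
      obtain ⟨k, hk⟩ := hdvd2
      have hβub : γ ≤ β + m := by omega
      have hsplit : γ - 1 - a = m * k + (γ - 1 - β) := by omega
      have hdiv : (γ - 1 - a) / m = k := by
        rw [hsplit, Nat.mul_add_div hm, Nat.div_eq_of_lt (by omega)]
        omega
      refine ⟨a, Finset.mem_filter.mpr ⟨haS, by omega⟩, ?_⟩
      show a + m * ((γ - 1 - a) / m) = β
      rw [hdiv]
      omega
  have hVγ : VAlg m p i = γ := AlgAgree.getD_sort_eq _ hγS hcard
  rw [hVγ, hγ]
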